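/- Let n be a squarefree composite positive integer with prime factorization n = p_1 p_2 ⋯ p_t, where p_1 < p_2 < ⋯ < p_t are distinct primes and t ≥ 2. Then the independence number of the prime-coprime graph of Z_n satisfies α(Θ(Z_n)) ≥ (p_{t−1} − 1)(p_t − 1) · Π_{r=1}^{t−2} p_r. -/

import Mathlib

/-- The prime-coprime graph: distinct vertices `g, h` are adjacent iff
`gcd (orderOf g) (orderOf h)` is `1` or a prime. -/
def primeCoprimeGraph (G : Type*) [Monoid G] : SimpleGraph G where
  Adj g h := g ≠ h ∧
    (Nat.gcd (orderOf g) (orderOf h) = 1 ∨ (Nat.gcd (orderOf g) (orderOf h)).Prime)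
  symm := by
    constructor
    rintro g h ⟨hne, hd⟩
    exact ⟨hne.symm, by rwa [Nat.gcd_comm]⟩
  loopless := by constructor; rintro g ⟨hne, -⟩; exact hne rfl

/-- A set of vertices is independent if no two of its elements are adjacent. -/
def IsIndepSet {V : Type*} (Γ : SimpleGraph V) (s : Set V) : Prop :=
  s.Pairwise fun a b => ¬ Γ.Adj a b

open scoped Classical in
/-- The independence number of a graph on a finite vertex set. -/
noncomputable def indepNum {V : Type*} [Fintype V] (Γ : SimpleGraph V) : ℕ :=
  Finset.univ.sup fun s : Finset V => if IsIndepSet Γ (s : Set V) then s.card else 0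

/-- A graph is split if its vertex set can be partitioned into two disjoint nonempty
subsets, one a clique and the other an independent set. -/
def IsSplit {V : Type*} (Γ : SimpleGraph V) : Prop :=
  ∃ K I : Set V, K.Nonempty ∧ I.Nonempty ∧ Disjoint K I ∧ K ∪ I = Set.univ ∧
    Γ.IsClique K ∧ IsIndepSet Γ I

theorem indepNum_cyclic_squarefree_lower_bound (n t : ℕ) [NeZero n] (ht : 2 ≤ t)
    (p : Fin t → ℕ) (hp : ∀ r, (p r).Prime) (hmono : StrictMono p)
    (hn : n = ∏ r, p r) :
    (p ⟨t - 2, by omega⟩ - 1) * (p ⟨t - 1, by omega⟩ - 1) *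
        ∏ r ∈ Finset.univ.filter (fun r : Fin t => (r : ℕ) < t - 2), p r ≤
      indepNum (primeCoprimeGraph (Multiplicative (ZMod n))) := by
  classical
  set a : Fin t := ⟨t - 2, by omega⟩ with ha
  set b : Fin t := ⟨t - 1, by omega⟩ with hb
  have hab : a ≠ b := by simp [ha, hb, Fin.ext_iff]; omega
  set m : ℕ := ∏ r ∈ Finset.univ.filter (fun r : Fin t => (r : ℕ) < t - 2), p r with hm
  set q : ℕ := p a * p b with hq
  -- n = m * q
  have hfilt : Finset.univ.filter (fun r : Fin t => ¬ (r : ℕ) < t - 2) = {a, b} := by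
    ext r
    simp [ha, hb, Finset.mem_insert, Fin.ext_iff]
    omega
  have hnmq : n = m * q := by
    rw [hn, ← Finset.prod_filter_mul_prod_filter_not Finset.univ
      (fun r : Fin t => (r : ℕ) < t - 2), hfilt, Finset.prod_pair hab]
  -- coprimality
  have hcop : Nat.Coprime m q := by
    apply Nat.Coprime.prod_left
    intro r hr
    simp only [Finset.mem_filter] at hr
    have hra : (r : ℕ) < t - 2 := hr.2
    have h1 : r ≠ a := by simp only [ne_eq, Fin.ext_iff, ha]; omega
    have h2 : r ≠ b := by simp only [ne_eq, Fin.ext_iff, hb]; omega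
    exact Nat.Coprime.mul_right
      ((Nat.coprime_primes (hp r) (hp a)).mpr (hmono.injective.ne h1))
      ((Nat.coprime_primes (hp r) (hp b)).mpr (hmono.injective.ne h2))
  haveI : NeZero m := ⟨by
    intro h; exact (NeZero.ne n) (by rw [hnmq, h, zero_mul])⟩
  haveI : NeZero q := ⟨by
    intro h; exact (NeZero.ne n) (by rw [hnmq, h, mul_zero])⟩
  -- CRT
  have e : ZMod n ≃+* ZMod m × ZMod q := by
    rw [hnmq]; exact ZMod.chineseRemainder hcop
  -- the map
  set f : ZMod m × (ZMod q)ˣ → Multiplicative (ZMod n) :=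
    fun x => Multiplicative.ofAdd (e.symm (x.1, (x.2 : ZMod q))) with hf
  have hfinj : Function.Injective f := by
    intro x y hxy
    have := e.symm.injective (Multiplicative.ofAdd.injective hxy)
    rw [Prod.ext_iff] at this
    exact Prod.ext this.1 (Units.ext this.2)
  set s : Finset (Multiplicative (ZMod n)) := Finset.image f Finset.univ with hs
  -- q divides the order of each element of s
  have horder : ∀ x ∈ s, q ∣ orderOf x := by
    intro x hx
    simp only [hs, Finset.mem_image] at hx
    obtain ⟨⟨c, u⟩, -, rfl⟩ := hx
    have h1 : orderOf (f (c, u)) = addOrderOf (e.symm (c, (u : ZMod q))) := by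
      simp [hf]
    have h2 : addOrderOf (e.symm (c, (u : ZMod q))) = addOrderOf ((c, (u : ZMod q)) : ZMod m × ZMod q) :=
      addOrderOf_injective e.symm.toAddEquiv.toAddMonoidHom e.symm.injective _
    have h3 : q ∣ addOrderOf ((u : ZMod q)) := by
      have hz : addOrderOf ((u : ZMod q)) • (u : ZMod q) = 0 := addOrderOf_nsmul_eq_zero _
      have : ((addOrderOf ((u : ZMod q)) : ZMod q)) * (u : ZMod q) = 0 := by
        rwa [nsmul_eq_mul] at hz
      have : ((addOrderOf ((u : ZMod q)) : ZMod q)) = 0 := by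
        have := congrArg (fun z => z * ((u⁻¹ : (ZMod q)ˣ) : ZMod q)) this
        simpa [mul_assoc] using this
      rwa [ZMod.natCast_eq_zero_iff] at this
    rw [h1, h2, Prod.addOrderOf]
    exact h3.trans (Nat.dvd_lcm_right _ _)
  -- q is neither 1 nor prime
  have hq1 : q ≠ 1 := Nat.ne_of_gt (one_lt_mul_of_lt_of_le (hp a).one_lt (hp b).one_lt.le)
  have hqp : ¬ q.Prime := by
    rw [hq, Nat.prime_mul_iff]
    push_neg
    exact ⟨fun _ => (hp b).ne_one, fun _ => (hp a).ne_one⟩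
  -- independence
  have hind : IsIndepSet (primeCoprimeGraph (Multiplicative (ZMod n))) (s : Set _) := by
    intro x hx y hy hxy hadj
    obtain ⟨-, hd⟩ := hadj
    have hdq : q ∣ Nat.gcd (orderOf x) (orderOf y) :=
      Nat.dvd_gcd (horder x hx) (horder y hy)
    rcases hd with h | h
    · exact hq1 (Nat.eq_one_of_dvd_one (h ▸ hdq))
    · rcases (Nat.dvd_prime h).mp hdq with h1 | h1
      · exact hq1 h1
      · exact hqp (h1 ▸ h)
  -- cardinality
  have hcard : s.card = m * ((p a - 1) * (p b - 1)) := by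
    rw [hs, Finset.card_image_of_injective _ hfinj, Finset.card_univ]
    rw [Fintype.card_prod, ZMod.card m, ZMod.card_units_eq_totient q]
    congr 1
    rw [hq, Nat.totient_mul ((Nat.coprime_primes (hp a) (hp b)).mpr (hmono.injective.ne hab)),
      Nat.totient_prime (hp a), Nat.totient_prime (hp b)]
  -- conclude
  have hle : s.card ≤ indepNum (primeCoprimeGraph (Multiplicative (ZMod n))) := by
    have h := Finset.le_sup (f := fun s' : Finset (Multiplicative (ZMod n)) =>
      if IsIndepSet (primeCoprimeGraph (Multiplicative (ZMod n))) (s' : Set _) then s'.card else 0)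
      (Finset.mem_univ s)
    unfold indepNum
    simpa [hind] using h
  calc (p a - 1) * (p b - 1) * m = s.card := by rw [hcard]; ring
    _ ≤ _ := hle
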